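/- For every dimension d ≥ 1, every σ > 0, every x ∈ ℝ^d with ‖x‖₂ = c, and every integer λ ≥ 1: (2πσ²)^{−d/2} · ∫_{ℝ^d} exp(−‖w‖²/(2σ²)) · (1 + exp(⟨w, x⟩))^{λ−1} · (1 + exp(−⟨w, x⟩))^{−λ} dw = (−1)^{λ−1}/2 + Σ_{i=1}^{λ−1} (−1)^{λ−1−i} · exp(i²σ²c²/2). -/

import Mathlib

/-!
STATEMENT 17: For every `d ≥ 1`, `σ > 0`, `x ∈ ℝ^d` with `‖x‖₂ = c`, and integer `λ ≥ 1`,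
`(2πσ²)^{−d/2} · ∫_{ℝ^d} exp(−‖w‖²/(2σ²)) · (1 + exp⟨w,x⟩)^{λ−1} · (1 + exp(−⟨w,x⟩))^{−λ} dw
  = (−1)^{λ−1}/2 + Σ_{i=1}^{λ−1} (−1)^{λ−1−i} · exp(i²σ²c²/2)`.
-/

open MeasureTheory Real
open scoped RealInnerProductSpace

section AuxGaussLogistic

variable {d : ℕ}

lemma my_integrable {b : ℝ} (hb : 0 < b) (k : ℝ) (x : EuclideanSpace ℝ (Fin d)) :
    Integrable (fun v : EuclideanSpace ℝ (Fin d) ↦ rexp (-b * ‖v‖ ^ 2 + k * ⟪x, v⟫)) := by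
  have h := (GaussianFourier.integrable_cexp_neg_mul_sq_norm_add
    (V := EuclideanSpace ℝ (Fin d)) (b := (b : ℂ)) (by simpa using hb) (k : ℂ) x).norm
  convert h using 2 with v
  rw [show (-(b:ℂ) * (‖v‖:ℂ) ^ 2 + (k:ℂ) * ((⟪x,v⟫ : ℝ) : ℂ))
      = ((-b * ‖v‖ ^ 2 + k * ⟪x,v⟫ : ℝ) : ℂ) by push_cast; ring,
    Complex.norm_exp, Complex.ofReal_re]

lemma my_integral {b : ℝ} (hb : 0 < b) (k : ℝ) (x : EuclideanSpace ℝ (Fin d)) :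
    ∫ v : EuclideanSpace ℝ (Fin d), rexp (-b * ‖v‖ ^ 2 + k * ⟪x, v⟫)
      = (π / b) ^ ((d : ℝ) / 2) * rexp (k ^ 2 * ‖x‖ ^ 2 / (4 * b)) := by
  have h := GaussianFourier.integral_cexp_neg_mul_sq_norm_add
    (V := EuclideanSpace ℝ (Fin d)) (b := (b : ℂ)) (by simpa using hb) (k : ℂ) x
  rw [← Complex.ofReal_inj]
  have hl : ((∫ v : EuclideanSpace ℝ (Fin d), rexp (-b * ‖v‖ ^ 2 + k * ⟪x, v⟫) : ℝ) : ℂ)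
      = ∫ v : EuclideanSpace ℝ (Fin d), Complex.exp (-(b:ℂ) * ‖v‖ ^ 2 + (k:ℂ) * (⟪x, v⟫ : ℝ)) := by
    change Complex.ofRealLI (∫ v : EuclideanSpace ℝ (Fin d), rexp (-b * ‖v‖ ^ 2 + k * ⟪x, v⟫)) = _
    rw [← Complex.ofRealLI.integral_comp_comm]
    congr 1 with v
    show ((rexp (-b * ‖v‖ ^ 2 + k * ⟪x, v⟫) : ℝ) : ℂ) = _
    rw [Complex.ofReal_exp]
    push_cast
    ring_nf
  rw [hl, h, finrank_euclideanSpace_fin]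
  rw [Complex.ofReal_mul, Complex.ofReal_cpow (by positivity), Complex.ofReal_exp]
  push_cast
  ring_nf

lemma pt1 (n : ℕ) (t : ℝ) :
    (1 + rexp t) ^ n * (1 + rexp (-t)) ^ (-(n + 1 : ℤ)) = rexp (n * t) / (1 + rexp (-t)) := by
  have hB : (0:ℝ) < 1 + rexp (-t) := by positivity
  have hA : 1 + rexp t = rexp t * (1 + rexp (-t)) := by
    rw [mul_add, mul_one, ← Real.exp_add]
    simp [add_comm]
  rw [hA, mul_pow, ← Real.exp_nat_mul, mul_assoc]
  congr 1
  rw [← zpow_natCast (1 + rexp (-t)) n, ← zpow_add₀ hB.ne']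
  rw [show (n : ℤ) + -(n + 1) = -1 by ring, zpow_neg_one]

lemma pt2 (n : ℕ) (t : ℝ) :
    rexp (n * t) / (1 + rexp (-t)) =
      (∑ i ∈ Finset.Icc 1 n, (-1:ℝ) ^ (n - i) * rexp (i * t)) +
        (-1:ℝ) ^ n / (1 + rexp (-t)) := by
  induction n with
  | zero => simp
  | succ n ih =>
    have hB : (0:ℝ) < 1 + rexp (-t) := by positivity
    have e1 : rexp (((n : ℝ) + 1) * t) * rexp (-t) = rexp (n * t) := by
      rw [← Real.exp_add]; congr 1; ring
    have key : rexp (((n : ℕ) + 1 : ℕ) * t) / (1 + rexp (-t))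
        = rexp (((n : ℝ) + 1) * t) - rexp ((n : ℝ) * t) / (1 + rexp (-t)) := by
      push_cast
      rw [eq_sub_iff_add_eq, ← add_div, div_eq_iff hB.ne']
      rw [mul_add, mul_one]
      linear_combination (-1 : ℝ) * e1
    have hsplit : (∑ i ∈ Finset.Icc 1 (n+1), (-1:ℝ) ^ (n + 1 - i) * rexp (i * t))
        = (∑ i ∈ Finset.Icc 1 n, (-1:ℝ) ^ (n + 1 - i) * rexp (i * t)) + rexp ((n+1 : ℕ) * t) := by
      rw [Finset.sum_Icc_succ_top (by omega : 1 ≤ n + 1)]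
      simp
    have hneg : (∑ i ∈ Finset.Icc 1 n, (-1:ℝ) ^ (n + 1 - i) * rexp (i * t))
        = -∑ i ∈ Finset.Icc 1 n, (-1:ℝ) ^ (n - i) * rexp (i * t) := by
      rw [← Finset.sum_neg_distrib]
      refine Finset.sum_congr rfl fun i hi => ?_
      have : n + 1 - i = (n - i) + 1 := by
        have := (Finset.mem_Icc.mp hi).2; omega
      rw [this, pow_succ]
      ring
    rw [key, ih, hsplit, hneg]
    push_cast
    ring

lemma sig_integrable {b : ℝ} (hb : 0 < b) (y : EuclideanSpace ℝ (Fin d)) :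
    Integrable (fun v : EuclideanSpace ℝ (Fin d) ↦
      rexp (-b * ‖v‖ ^ 2) / (1 + rexp (-⟪v, y⟫))) := by
  have hint : Integrable (fun v : EuclideanSpace ℝ (Fin d) ↦ rexp (-b * ‖v‖ ^ 2)) := by
    simpa using my_integrable hb 0 y
  refine hint.mono ?_ (ae_of_all _ fun v => ?_)
  · apply Continuous.aestronglyMeasurable
    apply Continuous.div
    · exact Real.continuous_exp.comp (continuous_const.mul (continuous_id.norm.pow 2))
    · exact continuous_const.add (Real.continuous_exp.comp ((continuous_id.inner continuous_const).neg))
    · intro v; positivity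
  · have hB : (0:ℝ) < 1 + rexp (-⟪v, y⟫) := by positivity
    rw [Real.norm_eq_abs, Real.norm_eq_abs, _root_.abs_of_nonneg (by positivity),
      _root_.abs_of_nonneg (Real.exp_pos _).le]
    rw [div_le_iff₀ hB]
    nlinarith [Real.exp_pos (-⟪v, y⟫), Real.exp_pos (-b * ‖v‖ ^ 2)]

lemma sig_int {b : ℝ} (hb : 0 < b) (x : EuclideanSpace ℝ (Fin d)) :
    ∫ v : EuclideanSpace ℝ (Fin d), rexp (-b * ‖v‖ ^ 2) / (1 + rexp (-⟪v, x⟫))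
      = (π / b) ^ ((d : ℝ) / 2) / 2 := by
  have h1 : ∫ v : EuclideanSpace ℝ (Fin d), rexp (-b * ‖v‖ ^ 2) / (1 + rexp (-⟪v, x⟫))
      = ∫ v : EuclideanSpace ℝ (Fin d), rexp (-b * ‖v‖ ^ 2) / (1 + rexp (-⟪v, -x⟫)) := by
    rw [← integral_neg_eq_self
      (fun v : EuclideanSpace ℝ (Fin d) => rexp (-b * ‖v‖ ^ 2) / (1 + rexp (-⟪v, x⟫))) volume]
    congr 1 with v
    simp [inner_neg_left, inner_neg_right]
  have h2 : (∫ v : EuclideanSpace ℝ (Fin d), rexp (-b * ‖v‖ ^ 2) / (1 + rexp (-⟪v, x⟫)))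
      + ∫ v : EuclideanSpace ℝ (Fin d), rexp (-b * ‖v‖ ^ 2) / (1 + rexp (-⟪v, x⟫))
      = (π / b) ^ ((d : ℝ) / 2) := by
    nth_rewrite 2 [h1]
    rw [← integral_add (sig_integrable hb x) (sig_integrable hb (-x))]
    have h0 : ∫ v : EuclideanSpace ℝ (Fin d), rexp (-b * ‖v‖ ^ 2) = (π / b) ^ ((d:ℝ)/2) := by
      simpa using my_integral hb 0 x
    rw [← h0]
    congr 1 with v
    have h3 := Real.exp_ne_zero (⟪v, x⟫)
    rw [inner_neg_right, neg_neg, Real.exp_neg]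
    field_simp
    ring
  linarith

end AuxGaussLogistic

theorem gaussian_integral_logistic_renyi_integrand
    (d : ℕ) (hd : 1 ≤ d) (σ : ℝ) (hσ : 0 < σ) (c : ℝ)
    (x : EuclideanSpace ℝ (Fin d)) (hx : ‖x‖ = c) (lam : ℕ) (hlam : 1 ≤ lam) :
    (2 * π * σ ^ 2) ^ (-(d : ℝ) / 2) *
        ∫ w : EuclideanSpace ℝ (Fin d),
          Real.exp (-‖w‖ ^ 2 / (2 * σ ^ 2)) * (1 + Real.exp ⟪w, x⟫) ^ (lam - 1) *
            (1 + Real.exp (-⟪w, x⟫)) ^ (-(lam : ℤ)) =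
      (-1 : ℝ) ^ (lam - 1) / 2 +
        ∑ i ∈ Finset.Icc 1 (lam - 1),
          (-1 : ℝ) ^ (lam - 1 - i) * Real.exp ((i : ℝ) ^ 2 * σ ^ 2 * c ^ 2 / 2) := by
  obtain ⟨n, rfl⟩ : ∃ n, lam = n + 1 := ⟨lam - 1, by omega⟩
  simp only [Nat.add_sub_cancel]
  have hσ' : σ ≠ 0 := hσ.ne'
  set b : ℝ := 1 / (2 * σ ^ 2) with hbdef
  have hb : 0 < b := by positivity
  have hinteg : ∀ w : EuclideanSpace ℝ (Fin d),
      Real.exp (-‖w‖ ^ 2 / (2 * σ ^ 2)) * (1 + Real.exp ⟪w, x⟫) ^ n *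
          (1 + Real.exp (-⟪w, x⟫)) ^ (-((n + 1 : ℕ)) : ℤ)
        = (∑ i ∈ Finset.Icc 1 n, (-1:ℝ) ^ (n - i) * rexp (-b * ‖w‖ ^ 2 + (i : ℝ) * ⟪x, w⟫))
          + (-1:ℝ) ^ n * (rexp (-b * ‖w‖ ^ 2) / (1 + rexp (-⟪w, x⟫))) := by
    intro w
    have h1 : Real.exp (-‖w‖ ^ 2 / (2 * σ ^ 2)) = rexp (-b * ‖w‖ ^ 2) := by
      congr 1
      rw [hbdef]
      field_simp
    rw [mul_assoc, h1, show (-((n + 1 : ℕ)) : ℤ) = -((n : ℤ) + 1) by push_cast; ring,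
      pt1 n ⟪w, x⟫, pt2 n ⟪w, x⟫, mul_add, Finset.mul_sum]
    congr 1
    · refine Finset.sum_congr rfl fun i _ => ?_
      rw [Real.exp_add, real_inner_comm x w]
      ring
    · ring
  rw [integral_congr_ae (ae_of_all _ hinteg)]
  have hFint : ∀ i ∈ Finset.Icc 1 n, Integrable (fun w : EuclideanSpace ℝ (Fin d) ↦
      (-1:ℝ) ^ (n - i) * rexp (-b * ‖w‖ ^ 2 + (i : ℝ) * ⟪x, w⟫)) :=
    fun i _ => (my_integrable hb (i : ℝ) x).const_mul _
  have hGint : Integrable (fun w : EuclideanSpace ℝ (Fin d) ↦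
      (-1:ℝ) ^ n * (rexp (-b * ‖w‖ ^ 2) / (1 + rexp (-⟪w, x⟫)))) :=
    (sig_integrable hb x).const_mul _
  rw [integral_add (integrable_finset_sum _ hFint) hGint, integral_finset_sum _ hFint]
  simp_rw [MeasureTheory.integral_const_mul]
  rw [sig_int hb x]
  rw [Finset.sum_congr rfl fun i _ => by rw [my_integral hb (i : ℝ) x]]
  have hpib : π / b = 2 * π * σ ^ 2 := by
    rw [hbdef]; field_simp
  rw [hpib]
  have hP : (0:ℝ) < 2 * π * σ ^ 2 := by positivity
  have hcancel : (2 * π * σ ^ 2) ^ (-(d : ℝ) / 2) * (2 * π * σ ^ 2) ^ ((d : ℝ) / 2) = 1 := by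
    rw [← Real.rpow_add hP, show -(d : ℝ) / 2 + (d : ℝ) / 2 = 0 by ring, Real.rpow_zero]
  have hexp : ∀ i : ℕ, (i : ℝ) ^ 2 * ‖x‖ ^ 2 / (4 * b) = (i : ℝ) ^ 2 * σ ^ 2 * c ^ 2 / 2 := by
    intro i
    rw [hx, hbdef]
    field_simp
    ring
  rw [mul_add, Finset.mul_sum]
  have hterm : ∀ i ∈ Finset.Icc 1 n,
      (2 * π * σ ^ 2) ^ (-(d : ℝ) / 2) * ((-1:ℝ) ^ (n - i) *
          ((2 * π * σ ^ 2) ^ ((d : ℝ) / 2) * rexp ((i : ℝ) ^ 2 * ‖x‖ ^ 2 / (4 * b))))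
        = (-1:ℝ) ^ (n - i) * rexp ((i : ℝ) ^ 2 * σ ^ 2 * c ^ 2 / 2) := by
    intro i _
    rw [hexp i]
    rw [show (2 * π * σ ^ 2) ^ (-(d : ℝ) / 2) * ((-1:ℝ) ^ (n - i) *
        ((2 * π * σ ^ 2) ^ ((d : ℝ) / 2) * rexp ((i : ℝ) ^ 2 * σ ^ 2 * c ^ 2 / 2)))
      = ((2 * π * σ ^ 2) ^ (-(d : ℝ) / 2) * (2 * π * σ ^ 2) ^ ((d : ℝ) / 2)) *
        ((-1:ℝ) ^ (n - i) * rexp ((i : ℝ) ^ 2 * σ ^ 2 * c ^ 2 / 2)) from by ring]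
    rw [hcancel, one_mul]
  rw [Finset.sum_congr rfl hterm]
  have hterm2 : (2 * π * σ ^ 2) ^ (-(d : ℝ) / 2) *
        ((-1:ℝ) ^ n * ((2 * π * σ ^ 2) ^ ((d : ℝ) / 2) / 2))
      = (-1:ℝ) ^ n / 2 := by
    rw [show (2 * π * σ ^ 2) ^ (-(d : ℝ) / 2) *
        ((-1:ℝ) ^ n * ((2 * π * σ ^ 2) ^ ((d : ℝ) / 2) / 2))
      = ((2 * π * σ ^ 2) ^ (-(d : ℝ) / 2) * (2 * π * σ ^ 2) ^ ((d : ℝ) / 2)) *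
        ((-1:ℝ) ^ n / 2) from by ring]
    rw [hcancel, one_mul]
  rw [hterm2, add_comm]
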